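/- For |q|<1, one has ∑_{n≥1} q^{n(n+1)}/((1+q^{2n-1})·(-q²;q²)_n) = -(q/(1-q)) · ∑_{n≥1} (-1)^n (q;q)_n q^{n(n+1)/2}/(-q;q)_n. -/

import Mathlib

open scoped BigOperators

/-- The finite q-Pochhammer symbol `(a;q)_n = ∏_{j=0}^{n-1} (1 - a q^j)`. -/
noncomputable def qPoch (a q : ℂ) (n : ℕ) : ℂ := ∏ j ∈ Finset.range n, (1 - a * q ^ j)

namespace QAux


lemma one_sub_ne {z : ℂ} (h : ‖z‖ < 1) : (1 : ℂ) - z ≠ 0 := by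
  intro h0
  have hz : z = 1 := by linear_combination -h0
  rw [hz] at h; simp at h

lemma one_add_ne {z : ℂ} (h : ‖z‖ < 1) : (1 : ℂ) + z ≠ 0 := by
  intro h0
  have hz : z = -1 := by linear_combination h0
  rw [hz] at h; simp at h

lemma qPoch_zero (a q : ℂ) : qPoch a q 0 = 1 := by simp [qPoch]

lemma qPoch_succ (a q : ℂ) (n : ℕ) :
    qPoch a q (n + 1) = qPoch a q n * (1 - a * q ^ n) := Finset.prod_range_succ _ _

lemma qPoch_succ' (a q : ℂ) (n : ℕ) :
    qPoch a q (n + 1) = (1 - a) * qPoch (a * q) q n := by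
  rw [qPoch, Finset.prod_range_succ']
  rw [mul_comm]
  simp only [pow_zero, mul_one]
  congr 1
  · unfold qPoch
    refine Finset.prod_congr rfl (fun i _ => ?_)
    rw [pow_succ']
    ring

lemma qPoch_ne_zero {a q : ℂ} (ha : ‖a‖ < 1) (hq : ‖q‖ ≤ 1) (n : ℕ) :
    qPoch a q n ≠ 0 := by
  rw [qPoch]
  apply Finset.prod_ne_zero_iff.2
  intro j _
  apply one_sub_ne
  rw [norm_mul, norm_pow]
  calc ‖a‖ * ‖q‖ ^ j ≤ ‖a‖ * 1 := by
        apply mul_le_mul_of_nonneg_left (pow_le_one₀ (norm_nonneg q) hq) (norm_nonneg a)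
    _ = ‖a‖ := mul_one _
    _ < 1 := ha

lemma norm_qPoch_le {a q : ℂ} (ha : ‖a‖ ≤ 1) (hq : ‖q‖ ≤ 1) (n : ℕ) :
    ‖qPoch a q n‖ ≤ 2 ^ n := by
  rw [qPoch, norm_prod]
  calc ∏ j ∈ Finset.range n, ‖1 - a * q ^ j‖ ≤ ∏ _j ∈ Finset.range n, (2:ℝ) := by
        apply Finset.prod_le_prod (fun j _ => norm_nonneg _)
        intro j _
        calc ‖(1:ℂ) - a * q ^ j‖ ≤ ‖(1:ℂ)‖ + ‖a * q ^ j‖ := norm_sub_le _ _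
          _ ≤ 1 + 1 * 1 := by
              rw [norm_one, norm_mul, norm_pow]
              gcongr
              exact pow_le_one₀ (norm_nonneg q) hq
          _ = 2 := by norm_num
    _ = 2 ^ n := by rw [Finset.prod_const, Finset.card_range]

lemma le_norm_qPoch {a q : ℂ} (ha : ‖a‖ < 1) (hq : ‖q‖ ≤ 1) (n : ℕ) :
    (1 - ‖a‖) ^ n ≤ ‖qPoch a q n‖ := by
  rw [qPoch, norm_prod]
  calc (1 - ‖a‖) ^ n = ∏ _j ∈ Finset.range n, (1 - ‖a‖) := by
        rw [Finset.prod_const, Finset.card_range]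
    _ ≤ ∏ j ∈ Finset.range n, ‖1 - a * q ^ j‖ := by
        apply Finset.prod_le_prod (fun j _ => by linarith [ha])
        intro j _
        have h1 : ‖a * q ^ j‖ ≤ ‖a‖ := by
          rw [norm_mul, norm_pow]
          calc ‖a‖ * ‖q‖ ^ j ≤ ‖a‖ * 1 :=
            mul_le_mul_of_nonneg_left (pow_le_one₀ (norm_nonneg q) hq) (norm_nonneg a)
          _ = ‖a‖ := mul_one _
        calc 1 - ‖a‖ ≤ 1 - ‖a * q ^ j‖ := by linarith
          _ = ‖(1:ℂ)‖ - ‖a * q ^ j‖ := by rw [norm_one]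
          _ ≤ ‖(1:ℂ) - a * q ^ j‖ := norm_sub_norm_le _ _

noncomputable def FA (q a b t : ℂ) (k : ℕ) : ℂ := qPoch a (q^2) k * t ^ k / qPoch b (q^2) k
noncomputable def FS (q a b t : ℂ) : ℂ := ∑' k, FA q a b t k

variable {q a b t : ℂ}

lemma normq2 (hq : ‖q‖ < 1) : ‖q^2‖ ≤ 1 := by
  rw [norm_pow]; nlinarith [norm_nonneg q, hq]

lemma norm_mul_pow_le (hq : ‖q‖ < 1) (hz : ‖b‖ < 1) (k : ℕ) : ‖b * (q^2)^k‖ < 1 := by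
  rw [norm_mul, norm_pow]
  calc ‖b‖ * ‖q^2‖^k ≤ ‖b‖ * 1 :=
        mul_le_mul_of_nonneg_left (pow_le_one₀ (norm_nonneg _) (normq2 hq)) (norm_nonneg b)
    _ = ‖b‖ := mul_one _
    _ < 1 := hz

lemma hbk (hq : ‖q‖ < 1) (hb : ‖b‖ < 1) (k : ℕ) : (1:ℂ) - b * (q^2)^k ≠ 0 :=
  one_sub_ne (norm_mul_pow_le hq hb k)

lemma FA_zero : FA q a b t 0 = 1 := by simp [FA, qPoch_zero]

lemma qPoch_shift (hb : ‖b‖ < 1) (k : ℕ) :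
    qPoch (b*q^2) (q^2) k = qPoch b (q^2) k * (1 - b*(q^2)^k) / (1 - b) := by
  rw [eq_div_iff (one_sub_ne hb)]
  linear_combination ((qPoch_succ' b (q^2) k).symm.trans (qPoch_succ b (q^2) k))

lemma FA_rec (hq : ‖q‖ < 1) (hb : ‖b‖ < 1) (k : ℕ) :
    FA q a b t (k+1) = FA q a b t k * ((1 - a*(q^2)^k) * t / (1 - b*(q^2)^k)) := by
  unfold FA
  rw [qPoch_succ, qPoch_succ, pow_succ t k]
  have h1 := qPoch_ne_zero hb (normq2 hq) k
  have h2 := hbk hq hb (q := q) k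
  field_simp

lemma FA_shift_b (hq : ‖q‖ < 1) (hb : ‖b‖ < 1) (k : ℕ) :
    FA q a (b*q^2) (t*q^2) k = FA q a b t k * ((1 - b) * (q^2)^k / (1 - b*(q^2)^k)) := by
  unfold FA
  rw [qPoch_shift hb, mul_pow]
  have h1 := qPoch_ne_zero hb (normq2 hq) k
  have h2 := hbk hq hb (q := q) k
  have h4 : (1:ℂ) - b ≠ 0 := one_sub_ne hb
  field_simp

lemma FA_shift_ab (hq : ‖q‖ < 1) (ha : ‖a‖ < 1) (hb : ‖b‖ < 1) (k : ℕ) :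
    FA q (a*q^2) (b*q^2) (t*q^2) k
      = FA q a b t k * ((1 - a*(q^2)^k) * (1 - b) * (q^2)^k / ((1 - a) * (1 - b*(q^2)^k))) := by
  unfold FA
  rw [qPoch_shift hb, qPoch_shift ha, mul_pow]
  have h1 := qPoch_ne_zero hb (normq2 hq) k
  have h2 := hbk hq hb (q := q) k
  have h2a := hbk hq ha (q := q) k
  have h4 : (1:ℂ) - b ≠ 0 := one_sub_ne hb
  have h5 : (1:ℂ) - a ≠ 0 := one_sub_ne ha
  field_simp

lemma FA_t_mul (k : ℕ) : FA q a b (t*q^2) k = (q^2)^k * FA q a b t k := by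
  unfold FA; rw [mul_pow]; ring

lemma G1 (hq : ‖q‖ < 1) (ha : ‖a‖ < 1) (hb : ‖b‖ < 1) (k : ℕ) :
    (t*(a-b)/(1-b)) * FA q a (b*q^2) (t*q^2) k
      = t * FA q a b t k - FA q a b t (k+1) := by
  rw [FA_rec hq hb, FA_shift_b hq hb]
  have h2 := hbk hq hb (q := q) k
  have h4 : (1:ℂ) - b ≠ 0 := one_sub_ne hb
  field_simp
  ring

lemma G2 (hq : ‖q‖ < 1) (ha : ‖a‖ < 1) (hb : ‖b‖ < 1) (ht : ‖t‖ < 1) (k : ℕ) :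
    FA q a b t k - (t*(b - a*t*q^2)*(1-a)/((1-t)*(1-b))) * FA q (a*q^2) (b*q^2) (t*q^2) k
      = ((1 - a*t*(q^2)^k)/(1-t)) * FA q a b t k
        - ((1 - a*t*(q^2)^(k+1))/(1-t)) * FA q a b t (k+1) := by
  rw [FA_rec hq hb, FA_shift_ab hq ha hb, pow_succ]
  have h2 := hbk hq hb (q := q) k
  have h4 : (1:ℂ) - b ≠ 0 := one_sub_ne hb
  have h5 : (1:ℂ) - a ≠ 0 := one_sub_ne ha
  have h6 : (1:ℂ) - t ≠ 0 := one_sub_ne ht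
  have scalar : 1 - (t*(b - a*t*q^2)*(1-a)/((1-t)*(1-b)))
        * ((1 - a*(q^2)^k)*(1-b)*(q^2)^k/((1-a)*(1 - b*(q^2)^k)))
      = (1 - a*t*(q^2)^k)/(1-t)
        - ((1 - a*t*((q^2)^k*q^2))/(1-t)) * ((1 - a*(q^2)^k)*t/(1 - b*(q^2)^k)) := by
    field_simp
    ring
  linear_combination (FA q a b t k) * scalar


lemma normq2_lt (hq : ‖q‖ < 1) : ‖q^2‖ < 1 := by
  rw [norm_pow]
  exact pow_lt_one₀ (norm_nonneg q) hq (by norm_num)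

lemma norm_b_q2 (hq : ‖q‖ < 1) (hb : ‖b‖ < 1) : ‖b * q^2‖ < 1 := by
  have := norm_mul_pow_le hq hb (q := q) 1
  rwa [pow_one] at this

lemma summable_FA (hq : ‖q‖ < 1) (ha : ‖a‖ < 1) (hb : ‖b‖ < 1) (ht : ‖t‖ < 1) :
    Summable (FA q a b t) := by
  apply summable_of_ratio_norm_eventually_le (r := (1 + ‖t‖)/2) (by linarith)
  have hb0 : (0:ℝ) < 1 - ‖b‖ := by linarith
  have hq2 : ‖q^2‖ < 1 := normq2_lt hq
  have hpow : Filter.Tendsto (fun k : ℕ => ‖q^2‖^k) Filter.atTop (nhds 0) :=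
    tendsto_pow_atTop_nhds_zero_of_lt_one (norm_nonneg _) hq2
  have hg : Filter.Tendsto
      (fun k : ℕ => (1 + ‖a‖*‖q^2‖^k)*‖t‖/(1 - ‖b‖*‖q^2‖^k)) Filter.atTop
      (nhds ((1 + ‖a‖*0)*‖t‖/(1 - ‖b‖*0))) := by
    apply Filter.Tendsto.div
    · exact (tendsto_const_nhds.add (hpow.const_mul _)).mul tendsto_const_nhds
    · exact tendsto_const_nhds.sub (hpow.const_mul _)
    · norm_num
  have hlim : (1 + ‖a‖*0)*‖t‖/(1 - ‖b‖*0) < (1 + ‖t‖)/2 := by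
    simp only [mul_zero, add_zero, sub_zero, one_mul, div_one]
    linarith
  filter_upwards [hg.eventually_lt_const hlim] with k hk
  have hb1 : ‖b‖*‖q^2‖^k ≤ ‖b‖*1 :=
    mul_le_mul_of_nonneg_left (pow_le_one₀ (norm_nonneg _) hq2.le) (norm_nonneg b)
  have hden : (0:ℝ) < 1 - ‖b‖*‖q^2‖^k := by nlinarith
  have hR : ‖(1 - a*(q^2)^k) * t / (1 - b*(q^2)^k)‖
      ≤ (1 + ‖a‖*‖q^2‖^k)*‖t‖/(1 - ‖b‖*‖q^2‖^k) := by
    rw [norm_div, norm_mul]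
    apply div_le_div₀ (by positivity) _ hden _
    · apply mul_le_mul_of_nonneg_right _ (norm_nonneg t)
      calc ‖(1:ℂ) - a*(q^2)^k‖ ≤ ‖(1:ℂ)‖ + ‖a*(q^2)^k‖ := norm_sub_le _ _
        _ = 1 + ‖a‖*‖q^2‖^k := by simp [norm_mul, norm_pow]
    · calc 1 - ‖b‖*‖q^2‖^k = ‖(1:ℂ)‖ - ‖b*(q^2)^k‖ := by
            simp [norm_mul, norm_pow]
        _ ≤ ‖(1:ℂ) - b*(q^2)^k‖ := norm_sub_norm_le _ _
  calc ‖FA q a b t (k+1)‖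
      = ‖(1 - a*(q^2)^k) * t / (1 - b*(q^2)^k)‖ * ‖FA q a b t k‖ := by
        rw [FA_rec hq hb, norm_mul, mul_comm]
    _ ≤ ((1 + ‖a‖*‖q^2‖^k)*‖t‖/(1 - ‖b‖*‖q^2‖^k)) * ‖FA q a b t k‖ :=
        mul_le_mul_of_nonneg_right hR (norm_nonneg _)
    _ ≤ ((1 + ‖t‖)/2) * ‖FA q a b t k‖ :=
        mul_le_mul_of_nonneg_right hk.le (norm_nonneg _)

lemma SUM1 (hq : ‖q‖ < 1) (ha : ‖a‖ < 1) (hb : ‖b‖ < 1) (ht : ‖t‖ < 1) :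
    (1-t) * FS q a b t = 1 - (t*(a-b)/(1-b)) * FS q a (b*q^2) (t*q^2) := by
  have hS := summable_FA hq ha hb ht (q := q)
  have hS1 : Summable (fun k => FA q a b t (k+1)) := (summable_nat_add_iff 1).2 hS
  have e1 : (t*(a-b)/(1-b)) * FS q a (b*q^2) (t*q^2)
      = ∑' k, ((t*(a-b)/(1-b)) * FA q a (b*q^2) (t*q^2) k) := tsum_mul_left.symm
  have e2 : ∑' k, ((t*(a-b)/(1-b)) * FA q a (b*q^2) (t*q^2) k)
      = ∑' k, (t * FA q a b t k - FA q a b t (k+1)) :=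
    tsum_congr (fun k => G1 hq ha hb k)
  have e3 : ∑' k, (t * FA q a b t k - FA q a b t (k+1))
      = t * FS q a b t - (FS q a b t - 1) := by
    rw [Summable.tsum_sub (hS.mul_left t) hS1, tsum_mul_left]
    have h0 := Summable.tsum_eq_zero_add hS
    rw [FA_zero] at h0
    unfold FS
    linear_combination h0
  linear_combination e1.trans (e2.trans e3)

lemma SUM2 (hq : ‖q‖ < 1) (ha : ‖a‖ < 1) (hb : ‖b‖ < 1) (ht : ‖t‖ < 1) :
    FS q a b t = (1 - a*t)/(1-t)
      + (t*(b - a*t*q^2)*(1-a)/((1-t)*(1-b))) * FS q (a*q^2) (b*q^2) (t*q^2) := by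
  have hS := summable_FA hq ha hb ht (q := q)
  have htq : ‖t * q^2‖ < 1 := norm_b_q2 hq ht
  have haq : ‖a * q^2‖ < 1 := norm_b_q2 hq ha
  have hbq : ‖b * q^2‖ < 1 := norm_b_q2 hq hb
  have hSt := summable_FA hq ha hb htq (q := q)
  have h6 : (1:ℂ) - t ≠ 0 := one_sub_ne ht
  set W : ℕ → ℂ := fun k => ((1 - a*t*(q^2)^k)/(1-t)) * FA q a b t k with hW
  have hWeq : ∀ k, W k = (1/(1-t)) * FA q a b t k - (a*t/(1-t)) * FA q a b (t*q^2) k := by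
    intro k
    simp only [hW]
    rw [FA_t_mul]
    field_simp
  have hSW : Summable W := by
    rw [funext hWeq]
    exact (hS.mul_left _).sub (hSt.mul_left _)
  have hSW1 : Summable (fun k => W (k+1)) := (summable_nat_add_iff 1).2 hSW
  have hS' := summable_FA hq haq hbq htq (q := q)
  have e1 : (t*(b - a*t*q^2)*(1-a)/((1-t)*(1-b))) * FS q (a*q^2) (b*q^2) (t*q^2)
      = ∑' k, ((t*(b - a*t*q^2)*(1-a)/((1-t)*(1-b))) * FA q (a*q^2) (b*q^2) (t*q^2) k) :=
    tsum_mul_left.symm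
  have e2 : FS q a b t - (t*(b - a*t*q^2)*(1-a)/((1-t)*(1-b))) * FS q (a*q^2) (b*q^2) (t*q^2)
      = ∑' k, (FA q a b t k
          - (t*(b - a*t*q^2)*(1-a)/((1-t)*(1-b))) * FA q (a*q^2) (b*q^2) (t*q^2) k) := by
    rw [e1]
    exact (Summable.tsum_sub hS (hS'.mul_left _)).symm
  have e3 : ∑' k, (FA q a b t k
        - (t*(b - a*t*q^2)*(1-a)/((1-t)*(1-b))) * FA q (a*q^2) (b*q^2) (t*q^2) k)
      = ∑' k, (W k - W (k+1)) := by
    refine tsum_congr (fun k => ?_)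
    rw [G2 hq ha hb ht k]
  have e4 : ∑' k, (W k - W (k+1)) = W 0 := by
    rw [Summable.tsum_sub hSW hSW1]
    have h0 := Summable.tsum_eq_zero_add hSW
    linear_combination h0
  have hW0 : W 0 = (1 - a*t)/(1-t) := by
    simp only [hW]
    simp [FA_zero]
  linear_combination e2.trans (e3.trans (e4.trans hW0))


lemma norm_npow_lt (hq : ‖q‖ < 1) {j : ℕ} (hj : j ≠ 0) : ‖q^j‖ < 1 := by
  rw [norm_pow]
  exact pow_lt_one₀ (norm_nonneg q) hq hj

lemma norm_npow_le (hq : ‖q‖ < 1) {j : ℕ} (hj : j ≠ 0) : ‖q^j‖ ≤ ‖q‖ := by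
  rw [norm_pow]
  exact pow_le_of_le_one (norm_nonneg q) hq.le hj

lemma one_add_pow_ne (hq : ‖q‖ < 1) {j : ℕ} (hj : j ≠ 0) : (1:ℂ) + q^j ≠ 0 :=
  one_add_ne (norm_npow_lt hq hj)

lemma one_sub_pow_ne (hq : ‖q‖ < 1) {j : ℕ} (hj : j ≠ 0) : (1:ℂ) - q^j ≠ 0 :=
  one_sub_ne (norm_npow_lt hq hj)

lemma norm_one_add_pow_le (hq : ‖q‖ < 1) (j : ℕ) : ‖(1:ℂ) + q^j‖ ≤ 2 := by
  calc ‖(1:ℂ) + q^j‖ ≤ ‖(1:ℂ)‖ + ‖q^j‖ := norm_add_le _ _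
    _ ≤ 1 + 1 := by
        rw [norm_one, norm_pow]
        have := pow_le_one₀ (norm_nonneg q) hq.le (n := j)
        linarith
    _ = 2 := by norm_num

lemma norm_one_sub_pow_le (hq : ‖q‖ < 1) (j : ℕ) : ‖(1:ℂ) - q^j‖ ≤ 2 := by
  calc ‖(1:ℂ) - q^j‖ ≤ ‖(1:ℂ)‖ + ‖q^j‖ := norm_sub_le _ _
    _ ≤ 1 + 1 := by
        rw [norm_one, norm_pow]
        have := pow_le_one₀ (norm_nonneg q) hq.le (n := j)
        linarith
    _ = 2 := by norm_num

lemma norm_one_add_pow_ge (hq : ‖q‖ < 1) {j : ℕ} (hj : j ≠ 0) :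
    1 - ‖q‖ ≤ ‖(1:ℂ) + q^j‖ := by
  have h := norm_npow_le hq hj
  calc 1 - ‖q‖ ≤ 1 - ‖q^j‖ := by linarith
    _ = ‖(1:ℂ)‖ - ‖-q^j‖ := by rw [norm_one, norm_neg]
    _ ≤ ‖(1:ℂ) - (-q^j)‖ := norm_sub_norm_le _ _
    _ = ‖(1:ℂ) + q^j‖ := by rw [sub_neg_eq_add]

lemma norm_one_sub_pow_ge (hq : ‖q‖ < 1) {j : ℕ} (hj : j ≠ 0) :
    1 - ‖q‖ ≤ ‖(1:ℂ) - q^j‖ := by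
  have h := norm_npow_le hq hj
  calc 1 - ‖q‖ ≤ 1 - ‖q^j‖ := by linarith
    _ = ‖(1:ℂ)‖ - ‖q^j‖ := by rw [norm_one]
    _ ≤ ‖(1:ℂ) - q^j‖ := norm_sub_norm_le _ _

lemma norm_FS_le_two (hq : ‖q‖ < 1) (ha : ‖a‖ ≤ 1) (hb : ‖b‖ ≤ ‖q‖) (hb1 : ‖b‖ < 1)
    (ht : ‖t‖ ≤ (1 - ‖q‖)/4) : ‖FS q a b t‖ ≤ 2 := by
  have hx1 : (0:ℝ) < 1 - ‖q‖ := by linarith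
  have hFAle : ∀ k, ‖FA q a b t k‖ ≤ (1/2)^k := by
    intro k
    have hnum : ‖qPoch a (q^2) k * t^k‖ ≤ 2^k * ‖t‖^k := by
      rw [norm_mul, norm_pow]
      apply mul_le_mul_of_nonneg_right (norm_qPoch_le ha (normq2 hq) k)
      positivity
    have hden : (1 - ‖q‖)^k ≤ ‖qPoch b (q^2) k‖ := by
      calc (1 - ‖q‖)^k ≤ (1 - ‖b‖)^k := by
            apply pow_le_pow_left₀ hx1.le
            linarith [hb]
        _ ≤ ‖qPoch b (q^2) k‖ := le_norm_qPoch hb1 (normq2 hq) k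
    have hdenpos : (0:ℝ) < (1 - ‖q‖)^k := pow_pos hx1 k
    calc ‖FA q a b t k‖ = ‖qPoch a (q^2) k * t^k‖ / ‖qPoch b (q^2) k‖ := by
          rw [FA, norm_div]
      _ ≤ (2^k * ‖t‖^k) / (1 - ‖q‖)^k := by
          apply div_le_div₀ (by positivity) hnum hdenpos hden
      _ = (2 * ‖t‖ / (1 - ‖q‖))^k := by
          rw [div_pow, mul_pow]
      _ ≤ (1/2)^k := by
          apply pow_le_pow_left₀ (by positivity)
          rw [div_le_div_iff₀ hx1 (by norm_num : (0:ℝ) < 2)]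
          nlinarith [ht, hx1]
  have hgeo : Summable (fun k : ℕ => ((1:ℝ)/2)^k) :=
    summable_geometric_of_lt_one (by norm_num) (by norm_num)
  have hsum : Summable (fun k => ‖FA q a b t k‖) :=
    Summable.of_nonneg_of_le (fun k => norm_nonneg _) hFAle hgeo
  calc ‖FS q a b t‖ ≤ ∑' k, ‖FA q a b t k‖ := norm_tsum_le_tsum_norm hsum
    _ ≤ ∑' k : ℕ, ((1:ℝ)/2)^k := Summable.tsum_le_tsum hFAle hsum hgeo
    _ = 2 := by
        rw [tsum_geometric_of_lt_one (by norm_num) (by norm_num)]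
        norm_num

noncomputable def Lfun (q : ℂ) (N : ℕ) : ℂ := FS q (q^2) (-q^(2*N+3)) (-q^(2*N+2))
noncomputable def Mfun (q : ℂ) (N : ℕ) : ℂ := FS q (q^(2*N+2)) (-q^(2*N+3)) (-q^(2*N+2))

lemma norm_neg_pow_lt (hq : ‖q‖ < 1) {j : ℕ} (hj : j ≠ 0) : ‖-q^j‖ < 1 := by
  rw [norm_neg]; exact norm_npow_lt hq hj

lemma Lrec (hq : ‖q‖ < 1) (N : ℕ) :
    (1 + q^(2*N+2)) * Lfun q N
      = 1 + (q^(2*N+4)*(1+q^(2*N+1))/(1+q^(2*N+3))) * Lfun q (N+1) := by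
  have ha := normq2_lt (q := q) hq
  have hb : ‖(-q^(2*N+3) : ℂ)‖ < 1 := norm_neg_pow_lt hq (by omega)
  have ht : ‖(-q^(2*N+2) : ℂ)‖ < 1 := norm_neg_pow_lt hq (by omega)
  have h := SUM1 hq ha hb ht
  have e1 : (-q^(2*N+3) : ℂ) * q^2 = -q^(2*(N+1)+3) := by ring
  have e2 : (-q^(2*N+2) : ℂ) * q^2 = -q^(2*(N+1)+2) := by ring
  rw [e1, e2] at h
  unfold Lfun
  have hne : (1:ℂ) + q^(2*N+3) ≠ 0 := one_add_pow_ne hq (by omega)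
  have hq21 : (1:ℂ) + q^(2*N+1) ≠ 0 := one_add_pow_ne hq (by omega)
  linear_combination h

lemma Mrec (hq : ‖q‖ < 1) (N : ℕ) :
    Mfun q N = (1+q^(4*N+4))/(1+q^(2*N+2))
      + (q^(4*N+5)*(1-q^(2*N+3))*(1-q^(2*N+2))/((1+q^(2*N+2))*(1+q^(2*N+3)))) * Mfun q (N+1) := by
  have ha : ‖(q^(2*N+2) : ℂ)‖ < 1 := norm_npow_lt hq (by omega)
  have hb : ‖(-q^(2*N+3) : ℂ)‖ < 1 := norm_neg_pow_lt hq (by omega)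
  have ht : ‖(-q^(2*N+2) : ℂ)‖ < 1 := norm_neg_pow_lt hq (by omega)
  have h := SUM2 hq ha hb ht
  have e0 : (q^(2*N+2) : ℂ) * q^2 = q^(2*(N+1)+2) := by ring
  have e1 : (-q^(2*N+3) : ℂ) * q^2 = -q^(2*(N+1)+3) := by ring
  have e2 : (-q^(2*N+2) : ℂ) * q^2 = -q^(2*(N+1)+2) := by ring
  rw [e0, e1, e2] at h
  unfold Mfun
  have hn1 : (1:ℂ) + q^(2*N+3) ≠ 0 := one_add_pow_ne hq (by omega)
  have hn2 : (1:ℂ) + q^(2*N+2) ≠ 0 := one_add_pow_ne hq (by omega)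
  linear_combination h


noncomputable def Eseq (q : ℂ) : ℕ → ℂ
  | 0 => q^2/((1+q)*(1+q^2))
  | (N+1) => Eseq q N * (q^(2*N+4)*(1+q^(2*N+1))/((1+q^(2*N+3))*(1+q^(2*N+4))))

noncomputable def Cseq (q : ℂ) : ℕ → ℂ
  | 0 => q^2/(1+q)
  | (N+1) => Cseq q N * (q^(4*N+5)*(1-q^(2*N+3))*(1-q^(2*N+2))/((1+q^(2*N+2))*(1+q^(2*N+3))))

lemma tendsto_pow_affine (hq : ‖q‖ < 1) {a : ℕ} (b : ℕ) (ha : a ≠ 0) (c : ℝ) :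
    Filter.Tendsto (fun N : ℕ => ‖q‖^(a*N+b) * c) Filter.atTop (nhds 0) := by
  have h0 : Filter.Tendsto (fun N : ℕ => (‖q‖^a)^N) Filter.atTop (nhds 0) :=
    tendsto_pow_atTop_nhds_zero_of_lt_one (by positivity)
      (pow_lt_one₀ (norm_nonneg q) hq ha)
  have h1 := h0.mul_const (‖q‖^b * c)
  rw [zero_mul] at h1
  apply h1.congr
  intro N
  rw [← pow_mul, ← mul_assoc, ← pow_add]

lemma summable_of_succ_ratio {f : ℕ → ℂ} {g : ℕ → ℝ}
    (hfg : ∀ N, ‖f (N+1)‖ ≤ g N * ‖f N‖)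
    (hg : Filter.Tendsto g Filter.atTop (nhds 0)) : Summable f := by
  apply summable_of_ratio_norm_eventually_le (r := 1/2) (by norm_num)
  filter_upwards [hg.eventually_lt_const (by norm_num : (0:ℝ) < 1/2)] with N hN
  calc ‖f (N+1)‖ ≤ g N * ‖f N‖ := hfg N
    _ ≤ 1/2 * ‖f N‖ := mul_le_mul_of_nonneg_right hN.le (norm_nonneg _)

lemma summableE (hq : ‖q‖ < 1) : Summable (Eseq q) := by
  have hx : (0:ℝ) < 1 - ‖q‖ := by linarith
  apply summable_of_succ_ratio
    (g := fun N => ‖q‖^(2*N+4) * (2/((1-‖q‖)*(1-‖q‖))))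
  · intro N
    have h1 : Eseq q (N+1)
        = Eseq q N * (q^(2*N+4)*(1+q^(2*N+1))/((1+q^(2*N+3))*(1+q^(2*N+4)))) := rfl
    rw [h1, norm_mul, mul_comm]
    apply mul_le_mul_of_nonneg_right _ (norm_nonneg _)
    rw [norm_div, norm_mul, norm_mul, norm_pow]
    calc ‖q‖^(2*N+4) * ‖(1:ℂ)+q^(2*N+1)‖ / (‖(1:ℂ)+q^(2*N+3)‖ * ‖(1:ℂ)+q^(2*N+4)‖)
        ≤ ‖q‖^(2*N+4) * 2 / ((1-‖q‖)*(1-‖q‖)) := by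
          apply div_le_div₀ (by positivity)
          · exact mul_le_mul_of_nonneg_left (norm_one_add_pow_le hq _) (by positivity)
          · positivity
          · apply mul_le_mul (norm_one_add_pow_ge hq (by omega))
              (norm_one_add_pow_ge hq (by omega)) hx.le (norm_nonneg _)
      _ = ‖q‖^(2*N+4) * (2/((1-‖q‖)*(1-‖q‖))) := by ring
  · exact tendsto_pow_affine hq 4 (by norm_num) _

lemma summableC (hq : ‖q‖ < 1) : Summable (Cseq q) := by
  have hx : (0:ℝ) < 1 - ‖q‖ := by linarith
  apply summable_of_succ_ratio
    (g := fun N => ‖q‖^(4*N+5) * (4/((1-‖q‖)*(1-‖q‖))))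
  · intro N
    have h1 : Cseq q (N+1)
        = Cseq q N * (q^(4*N+5)*(1-q^(2*N+3))*(1-q^(2*N+2))/((1+q^(2*N+2))*(1+q^(2*N+3)))) := rfl
    rw [h1, norm_mul, mul_comm]
    apply mul_le_mul_of_nonneg_right _ (norm_nonneg _)
    rw [norm_div, norm_mul, norm_mul, norm_mul, norm_pow]
    calc ‖q‖^(4*N+5) * ‖(1:ℂ)-q^(2*N+3)‖ * ‖(1:ℂ)-q^(2*N+2)‖
          / (‖(1:ℂ)+q^(2*N+2)‖ * ‖(1:ℂ)+q^(2*N+3)‖)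
        ≤ ‖q‖^(4*N+5) * 2 * 2 / ((1-‖q‖)*(1-‖q‖)) := by
          apply div_le_div₀ (by positivity)
          · apply mul_le_mul _ (norm_one_sub_pow_le hq _) (norm_nonneg _) (by positivity)
            exact mul_le_mul_of_nonneg_left (norm_one_sub_pow_le hq _) (by positivity)
          · positivity
          · apply mul_le_mul (norm_one_add_pow_ge hq (by omega))
              (norm_one_add_pow_ge hq (by omega)) hx.le (norm_nonneg _)
      _ = ‖q‖^(4*N+5) * (4/((1-‖q‖)*(1-‖q‖))) := by ring
  · exact tendsto_pow_affine hq 5 (by norm_num) _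

lemma invB (hq : ‖q‖ < 1) (N : ℕ) :
    q^2/(1+q) * Lfun q 0
      = (∑ n ∈ Finset.range N, Eseq q n) + Eseq q N * ((1+q^(2*N+2)) * Lfun q N) := by
  induction N with
  | zero =>
      simp only [Finset.range_zero, Finset.sum_empty, zero_add]
      have h0 : Eseq q 0 = q^2/((1+q)*(1+q^2)) := rfl
      rw [h0]
      have hne1 : (1:ℂ) + q ≠ 0 := one_add_ne (by simpa using hq)
      have hne2 : (1:ℂ) + q^2 ≠ 0 := one_add_pow_ne hq (by norm_num)
      have e : (2*(0:ℕ)+2) = 2 := by norm_num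
      rw [e]
      field_simp
  | succ N ih =>
      rw [Finset.sum_range_succ]
      have hrec := Lrec hq N
      have hE : Eseq q (N+1)
          = Eseq q N * (q^(2*N+4)*(1+q^(2*N+1))/((1+q^(2*N+3))*(1+q^(2*N+4)))) := rfl
      have hd : Eseq q (N+1) * (1+q^(2*N+4))
          = Eseq q N * (q^(2*N+4)*(1+q^(2*N+1))/(1+q^(2*N+3))) := by
        rw [hE]
        have hne3 : (1:ℂ) + q^(2*N+3) ≠ 0 := one_add_pow_ne hq (by omega)
        have hne4 : (1:ℂ) + q^(2*N+4) ≠ 0 := one_add_pow_ne hq (by omega)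
        field_simp
      have he : (2*(N+1)+2) = 2*N+4 := by omega
      rw [he]
      linear_combination ih + Eseq q N * hrec - Lfun q (N+1) * hd

lemma invA (hq : ‖q‖ < 1) (N : ℕ) :
    q^2/(1+q) * Mfun q 0
      = (∑ m ∈ Finset.range N, Cseq q m * ((1+q^(4*m+4))/(1+q^(2*m+2))))
        + Cseq q N * Mfun q N := by
  induction N with
  | zero =>
      simp only [Finset.range_zero, Finset.sum_empty, zero_add]
      have h0 : Cseq q 0 = q^2/(1+q) := rfl
      rw [h0]
  | succ N ih =>
      rw [Finset.sum_range_succ]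
      have hrec := Mrec hq N
      have hC : Cseq q (N+1)
          = Cseq q N * (q^(4*N+5)*(1-q^(2*N+3))*(1-q^(2*N+2))/((1+q^(2*N+2))*(1+q^(2*N+3)))) := rfl
      linear_combination ih + Cseq q N * hrec + Mfun q (N+1) * (hC.symm)


lemma ev_Lfun_le (hq : ‖q‖ < 1) :
    ∀ᶠ N in Filter.atTop, ‖Lfun q N‖ ≤ 2 ∧ ‖Mfun q N‖ ≤ 2 := by
  have hx : (0:ℝ) < (1 - ‖q‖)/4 := by linarith
  have ht := (tendsto_pow_affine hq (a := 2) 2 (by norm_num) 1).eventually_lt_const hx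
  filter_upwards [ht] with N hN
  have hpow : ‖q‖^(2*N+2) ≤ (1-‖q‖)/4 := by
    have := hN
    rw [mul_one] at this
    exact this.le
  have htn : ‖(-q^(2*N+2) : ℂ)‖ ≤ (1-‖q‖)/4 := by
    rw [norm_neg, norm_pow]; exact hpow
  have hbn : ‖(-q^(2*N+3) : ℂ)‖ ≤ ‖q‖ := by
    rw [norm_neg]; exact norm_npow_le hq (by omega)
  have hbn1 : ‖(-q^(2*N+3) : ℂ)‖ < 1 := norm_neg_pow_lt hq (by omega)
  constructor
  · exact norm_FS_le_two hq (normq2 hq) hbn hbn1 htn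
  · refine norm_FS_le_two hq ?_ hbn hbn1 htn
    rw [norm_pow]
    exact pow_le_one₀ (norm_nonneg q) hq.le

lemma tsumE (hq : ‖q‖ < 1) : ∑' n, Eseq q n = q^2/(1+q) * Lfun q 0 := by
  have hE := summableE (q := q) hq
  have hcorr : Filter.Tendsto (fun N => Eseq q N * ((1+q^(2*N+2)) * Lfun q N))
      Filter.atTop (nhds 0) := by
    rw [tendsto_zero_iff_norm_tendsto_zero]
    apply squeeze_zero' (Filter.Eventually.of_forall (fun N => norm_nonneg _))
    · filter_upwards [ev_Lfun_le hq] with N hN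
      calc ‖Eseq q N * ((1+q^(2*N+2)) * Lfun q N)‖
          = ‖Eseq q N‖ * (‖(1:ℂ)+q^(2*N+2)‖ * ‖Lfun q N‖) := by
            rw [norm_mul, norm_mul]
        _ ≤ ‖Eseq q N‖ * (2 * 2) := by
            apply mul_le_mul_of_nonneg_left _ (norm_nonneg _)
            exact mul_le_mul (norm_one_add_pow_le hq _) hN.1 (norm_nonneg _) (by norm_num)
        _ = ‖Eseq q N‖ * 4 := by ring
    · have h0 : Filter.Tendsto (fun N => ‖Eseq q N‖) Filter.atTop (nhds 0) :=
        tendsto_zero_iff_norm_tendsto_zero.mp hE.tendsto_atTop_zero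
      have h1 := h0.mul_const 4
      rwa [zero_mul] at h1
  have hps : ∀ N, ∑ n ∈ Finset.range N, Eseq q n
      = q^2/(1+q) * Lfun q 0 - Eseq q N * ((1+q^(2*N+2)) * Lfun q N) := by
    intro N
    linear_combination -invB hq N
  have hpartial : Filter.Tendsto (fun N => ∑ n ∈ Finset.range N, Eseq q n)
      Filter.atTop (nhds (q^2/(1+q) * Lfun q 0)) := by
    have h2 := (tendsto_const_nhds :
        Filter.Tendsto (fun _ : ℕ => q^2/(1+q) * Lfun q 0) Filter.atTop _).sub hcorr
    rw [sub_zero] at h2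
    exact h2.congr (fun N => (hps N).symm)
  exact tendsto_nhds_unique hE.hasSum.tendsto_sum_nat hpartial

lemma summableCA (hq : ‖q‖ < 1) :
    Summable (fun m => Cseq q m * ((1+q^(4*m+4))/(1+q^(2*m+2)))) := by
  have hx : (0:ℝ) < 1 - ‖q‖ := by linarith
  have hA : ∀ m : ℕ, ‖((1:ℂ)+q^(4*m+4))/(1+q^(2*m+2))‖ ≤ 2/(1-‖q‖) := by
    intro m
    rw [norm_div]
    exact div_le_div₀ (by norm_num) (norm_one_add_pow_le hq _) hx
      (norm_one_add_pow_ge hq (by omega))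
  apply Summable.of_norm_bounded (g := fun m => ‖Cseq q m‖ * (2/(1-‖q‖)))
  · exact ((summableC (q := q) hq).norm).mul_right _
  · intro m
    rw [norm_mul]
    exact mul_le_mul_of_nonneg_left (hA m) (norm_nonneg _)

lemma tsumC (hq : ‖q‖ < 1) :
    ∑' m, Cseq q m * ((1+q^(4*m+4))/(1+q^(2*m+2))) = q^2/(1+q) * Mfun q 0 := by
  have hf := summableCA (q := q) hq
  have hcorr : Filter.Tendsto (fun N => Cseq q N * Mfun q N) Filter.atTop (nhds 0) := by
    rw [tendsto_zero_iff_norm_tendsto_zero]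
    apply squeeze_zero' (Filter.Eventually.of_forall (fun N => norm_nonneg _))
    · filter_upwards [ev_Lfun_le hq] with N hN
      calc ‖Cseq q N * Mfun q N‖ = ‖Cseq q N‖ * ‖Mfun q N‖ := norm_mul _ _
        _ ≤ ‖Cseq q N‖ * 2 := mul_le_mul_of_nonneg_left hN.2 (norm_nonneg _)
    · have h0 : Filter.Tendsto (fun N => ‖Cseq q N‖) Filter.atTop (nhds 0) :=
        tendsto_zero_iff_norm_tendsto_zero.mp (summableC (q := q) hq).tendsto_atTop_zero
      have h1 := h0.mul_const 2
      rwa [zero_mul] at h1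
  have hps : ∀ N, ∑ m ∈ Finset.range N, Cseq q m * ((1+q^(4*m+4))/(1+q^(2*m+2)))
      = q^2/(1+q) * Mfun q 0 - Cseq q N * Mfun q N := by
    intro N
    linear_combination -invA hq N
  have hpartial : Filter.Tendsto
      (fun N => ∑ m ∈ Finset.range N, Cseq q m * ((1+q^(4*m+4))/(1+q^(2*m+2))))
      Filter.atTop (nhds (q^2/(1+q) * Mfun q 0)) := by
    have h2 := (tendsto_const_nhds :
        Filter.Tendsto (fun _ : ℕ => q^2/(1+q) * Mfun q 0) Filter.atTop _).sub hcorr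
    rw [sub_zero] at h2
    exact h2.congr (fun N => (hps N).symm)
  exact tendsto_nhds_unique hf.hasSum.tendsto_sum_nat hpartial

lemma MeqL (q : ℂ) : Mfun q 0 = Lfun q 0 := by
  unfold Mfun Lfun
  norm_num


noncomputable def sTerm (q : ℂ) (n : ℕ) : ℂ :=
  q ^ ((n + 1) * (n + 2)) / ((1 + q ^ (2 * (n + 1) - 1)) * qPoch (-q ^ 2) (q ^ 2) (n + 1))

noncomputable def tTerm (q : ℂ) (n : ℕ) : ℂ :=
  (-1 : ℂ) ^ (n + 1) * qPoch q q (n + 1) * q ^ ((n + 1) * (n + 2) / 2) / qPoch (-q) q (n + 1)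

lemma qPoch_negq2_ne (hq : ‖q‖ < 1) (n : ℕ) : qPoch (-q^2) (q^2) n ≠ 0 := by
  apply qPoch_ne_zero _ (normq2 hq)
  rw [norm_neg]
  exact normq2_lt hq

lemma sTerm_eq (hq : ‖q‖ < 1) : ∀ n, sTerm q n = Eseq q n := by
  intro n
  induction n with
  | zero =>
      unfold sTerm
      have h0 : Eseq q 0 = q^2/((1+q)*(1+q^2)) := rfl
      rw [h0]
      norm_num [qPoch_succ, qPoch_zero]
  | succ n ih =>
      have hfac : (1 : ℂ) - (-q^2)*(q^2)^(n+1) = 1 + q^(2*n+4) := by ring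
      have h4 : qPoch (-q^2) (q^2) (n+1+1) = qPoch (-q^2) (q^2) (n+1) * (1 + q^(2*n+4)) := by
        rw [qPoch_succ, hfac]
      have h1 : (n+1+1)*(n+1+2) = (n+1)*(n+2) + (2*n+4) := by ring
      have h2 : 2*(n+1+1)-1 = 2*n+3 := by omega
      have h3 : 2*(n+1)-1 = 2*n+1 := by omega
      have hE : Eseq q (n+1)
          = Eseq q n * (q^(2*n+4)*(1+q^(2*n+1))/((1+q^(2*n+3))*(1+q^(2*n+4)))) := rfl
      unfold sTerm at ih ⊢
      rw [h4, h1, h2, pow_add, hE, ← ih, h3]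
      have hne1 : (1:ℂ) + q^(2*n+1) ≠ 0 := one_add_pow_ne hq (by omega)
      have hne3 : (1:ℂ) + q^(2*n+3) ≠ 0 := one_add_pow_ne hq (by omega)
      have hne4 : (1:ℂ) + q^(2*n+4) ≠ 0 := one_add_pow_ne hq (by omega)
      have hP := qPoch_negq2_ne hq (n+1)
      field_simp

lemma tri_succ (n : ℕ) : (n+2)*(n+3)/2 = (n+1)*(n+2)/2 + (n+2) := by
  have e1 : 2 ∣ (n+1)*(n+2) := (Nat.even_mul_succ_self (n+1)).two_dvd
  obtain ⟨P, hP⟩ : ∃ P, (n+1)*(n+2) = P := ⟨_, rfl⟩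
  obtain ⟨Q, hQ⟩ : ∃ Q, (n+2)*(n+3) = Q := ⟨_, rfl⟩
  have key : Q = P + 2*(n+2) := by rw [← hP, ← hQ]; ring
  rw [hP] at e1
  rw [hP, hQ]
  omega

lemma qPoch_negq_ne (hq : ‖q‖ < 1) (n : ℕ) : qPoch (-q) q n ≠ 0 := by
  apply qPoch_ne_zero _ hq.le
  rwa [norm_neg]

lemma qPoch_q_ne (hq : ‖q‖ < 1) (n : ℕ) : qPoch q q n ≠ 0 :=
  qPoch_ne_zero hq hq.le n

lemma tTerm_succ (hq : ‖q‖ < 1) (n : ℕ) :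
    tTerm q (n+1) = tTerm q n * (-(q^(n+2)) * (1 - q^(n+2)) / (1 + q^(n+2))) := by
  unfold tTerm
  have hfa : (1:ℂ) - q * q^(n+1) = 1 - q^(n+2) := by ring
  have hfb : (1:ℂ) - (-q) * q^(n+1) = 1 + q^(n+2) := by ring
  have h4 : qPoch q q (n+1+1) = qPoch q q (n+1) * (1 - q^(n+2)) := by
    rw [qPoch_succ, hfa]
  have h5 : qPoch (-q) q (n+1+1) = qPoch (-q) q (n+1) * (1 + q^(n+2)) := by
    rw [qPoch_succ, hfb]
  have h6 : (n+1+1)*(n+1+2) = (n+2)*(n+3) := by ring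
  have h7 : q ^ ((n+1+1)*(n+1+2)/2) = q ^ ((n+1)*(n+2)/2) * q^(n+2) := by
    rw [h6, tri_succ, pow_add]
  rw [h4, h5, h7, pow_succ]
  have hne : (1:ℂ) + q^(n+2) ≠ 0 := one_add_pow_ne hq (by omega)
  have hP := qPoch_negq_ne hq (n+1)
  field_simp

lemma summableT (hq : ‖q‖ < 1) : Summable (tTerm q) := by
  have hx : (0:ℝ) < 1 - ‖q‖ := by linarith
  apply summable_of_succ_ratio (g := fun n => ‖q‖^(1*n+2) * (2/(1-‖q‖)))
  · intro n
    rw [tTerm_succ hq, norm_mul, mul_comm]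
    apply mul_le_mul_of_nonneg_right _ (norm_nonneg _)
    rw [norm_div, norm_mul, norm_neg, norm_pow]
    calc ‖q‖^(n+2) * ‖(1:ℂ) - q^(n+2)‖ / ‖(1:ℂ) + q^(n+2)‖
        ≤ ‖q‖^(n+2) * 2 / (1-‖q‖) := by
          apply div_le_div₀ (by positivity)
            (mul_le_mul_of_nonneg_left (norm_one_sub_pow_le hq _) (by positivity)) hx
            (norm_one_add_pow_ge hq (by omega))
      _ = ‖q‖^(1*n+2) * (2/(1-‖q‖)) := by rw [one_mul]; ring
  · exact tendsto_pow_affine hq 2 (by norm_num) _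

lemma A4a (hq : ‖q‖ < 1) : ∀ m, -(q/(1-q)) * tTerm q (2*m) = Cseq q m := by
  intro m
  induction m with
  | zero =>
      have h0 : Cseq q 0 = q^2/(1+q) := rfl
      rw [h0]
      unfold tTerm
      norm_num [qPoch_succ, qPoch_zero]
      have hne1 : (1:ℂ) - q ≠ 0 := one_sub_ne (by simpa using hq)
      have hne2 : (1:ℂ) + q ≠ 0 := one_add_ne (by simpa using hq)
      field_simp
      ring
  | succ m ih =>
      have e1 : 2*(m+1) = (2*m+1)+1 := by omega
      have e2 : (2*m)+2 = 2*m+2 := rfl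
      have hs1 := tTerm_succ hq (2*m)
      have hs2 := tTerm_succ hq (2*m+1)
      have e3 : (2*m+1)+2 = 2*m+3 := by omega
      rw [e3] at hs2
      have hC : Cseq q (m+1)
          = Cseq q m * (q^(4*m+5)*(1-q^(2*m+3))*(1-q^(2*m+2))/((1+q^(2*m+2))*(1+q^(2*m+3)))) := rfl
      rw [e1, hs2, hs1, hC, ← ih]
      have hne2 : (1:ℂ) + q^(2*m+2) ≠ 0 := one_add_pow_ne hq (by omega)
      have hne3 : (1:ℂ) + q^(2*m+3) ≠ 0 := one_add_pow_ne hq (by omega)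
      field_simp
      ring

lemma pairCA (hq : ‖q‖ < 1) (m : ℕ) :
    -(q/(1-q)) * (tTerm q (2*m) + tTerm q (2*m+1))
      = Cseq q m * ((1+q^(4*m+4))/(1+q^(2*m+2))) := by
  have hb := tTerm_succ hq (2*m)
  rw [hb]
  have hne2 : (1:ℂ) + q^(2*m+2) ≠ 0 := one_add_pow_ne hq (by omega)
  have hA : (1:ℂ) + (-(q^(2*m+2)) * (1 - q^(2*m+2)) / (1 + q^(2*m+2)))
      = (1+q^(4*m+4))/(1+q^(2*m+2)) := by
    field_simp
    ring
  have ha := A4a hq m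
  linear_combination (1 + (-(q^(2*m+2)) * (1 - q^(2*m+2)) / (1 + q^(2*m+2)))) * ha
    + Cseq q m * hA

lemma rhs_eq (hq : ‖q‖ < 1) :
    -(q/(1-q)) * ∑' n, tTerm q n = q^2/(1+q) * Mfun q 0 := by
  have hT := summableT (q := q) hq
  have he : Summable (fun m => tTerm q (2*m)) :=
    hT.comp_injective (fun a b h => by omega)
  have ho : Summable (fun m => tTerm q (2*m+1)) :=
    hT.comp_injective (fun a b h => by omega)
  have hsplit := tsum_even_add_odd he ho
  calc -(q/(1-q)) * ∑' n, tTerm q n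
      = -(q/(1-q)) * (∑' m, tTerm q (2*m) + ∑' m, tTerm q (2*m+1)) := by rw [hsplit]
    _ = ∑' m, (-(q/(1-q)) * (tTerm q (2*m) + tTerm q (2*m+1))) := by
        rw [tsum_mul_left, Summable.tsum_add he ho]
    _ = ∑' m, Cseq q m * ((1+q^(4*m+4))/(1+q^(2*m+2))) := tsum_congr (pairCA hq)
    _ = q^2/(1+q) * Mfun q 0 := tsumC hq

lemma lhs_eq (hq : ‖q‖ < 1) :
    ∑' n, sTerm q n = q^2/(1+q) * Lfun q 0 := by
  rw [tsum_congr (sTerm_eq hq)]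
  exact tsumE hq

end QAux

/-- For |q|<1,
`∑_{n≥1} q^{n(n+1)}/((1+q^{2n-1})(-q²;q²)_n)
  = -(q/(1-q)) ∑_{n≥1} (-1)^n (q;q)_n q^{n(n+1)/2}/(-q;q)_n`. -/


theorem stmt_4 (q : ℂ) (hq : ‖q‖ < 1) :
    ∑' n : ℕ, q ^ ((n + 1) * (n + 2)) /
        ((1 + q ^ (2 * (n + 1) - 1)) * qPoch (-q ^ 2) (q ^ 2) (n + 1))
      = -(q / (1 - q)) *
          ∑' n : ℕ, (-1 : ℂ) ^ (n + 1) * qPoch q q (n + 1) * q ^ ((n + 1) * (n + 2) / 2) /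
            qPoch (-q) q (n + 1) := by
  have h1 : ∑' n : ℕ, q ^ ((n + 1) * (n + 2)) /
        ((1 + q ^ (2 * (n + 1) - 1)) * qPoch (-q ^ 2) (q ^ 2) (n + 1))
      = ∑' n, QAux.sTerm q n := rfl
  have h2 : (∑' n : ℕ, (-1 : ℂ) ^ (n + 1) * qPoch q q (n + 1) * q ^ ((n + 1) * (n + 2) / 2) /
            qPoch (-q) q (n + 1)) = ∑' n, QAux.tTerm q n := rfl
  rw [h1, h2, QAux.lhs_eq hq, QAux.rhs_eq hq, QAux.MeqL]
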